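/- Let n ≥ 1 and let ψ ∈ 𝒮(ℝⁿ;ℂ) with ‖ψ‖_{L²} = 1 and vanishing first moments, i.e. ⟨ψ, R_j ψ⟩_{L²} = 0 for all j = 1, …, 2n. Let V = V(ψ) be its covariance matrix and let Φ(x,y) = ψ(x)ψ(y). Then ⟨Φ, G(GΦ)⟩_{L²(ℝ^{2n})} = (1/4)·Tr(Ω V Ωᵀ V) − n/2. -/

import Mathlib

open scoped BigOperators
open MeasureTheory

/-- The quadrature operators: `R_j` (for `j = Sum.inl i`) is multiplication by the
coordinate `x_i`, and (for `j = Sum.inr i`) it is `-i ∂/∂x_i`. -/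
noncomputable def quadratureOp (n : ℕ) (j : Fin n ⊕ Fin n)
    (f : (Fin n → ℝ) → ℂ) : (Fin n → ℝ) → ℂ :=
  match j with
  | Sum.inl i => fun x => (x i : ℂ) * f x
  | Sum.inr i => fun x => -Complex.I * fderiv ℝ f x (Pi.single i 1)

/-- The first moments `m_j(ψ) = ⟨ψ, R_j ψ⟩` (a real number). -/
noncomputable def firstMoment (n : ℕ) (ψ : (Fin n → ℝ) → ℂ) (j : Fin n ⊕ Fin n) : ℝ :=
  (∫ x, (starRingEnd ℂ) (ψ x) * quadratureOp n j ψ x).re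

/-- The covariance matrix `V(ψ)_{jk} = 2 Re ⟨(R_j − m_j)ψ, (R_k − m_k)ψ⟩`. -/
noncomputable def covMatrix (n : ℕ) (ψ : (Fin n → ℝ) → ℂ) :
    Matrix (Fin n ⊕ Fin n) (Fin n ⊕ Fin n) ℝ :=
  Matrix.of fun j k => 2 *
    (∫ x, (starRingEnd ℂ) (quadratureOp n j ψ x - (firstMoment n ψ j : ℂ) * ψ x) *
      (quadratureOp n k ψ x - (firstMoment n ψ k : ℂ) * ψ x)).re

/-- The standard symplectic form `Ω = [[0, Iₙ], [−Iₙ, 0]]`. -/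
noncomputable def symplOmega (n : ℕ) : Matrix (Fin n ⊕ Fin n) (Fin n ⊕ Fin n) ℝ :=
  Matrix.fromBlocks 0 1 (-1) 0

/-- The generator `G` of simultaneous phase-space rotations of two copies:
`(GΦ)(x,y) = −i Σ_j (x_j ∂Φ/∂y_j − y_j ∂Φ/∂x_j)`. -/
noncomputable def rotGen (n : ℕ) (F : ((Fin n → ℝ) × (Fin n → ℝ)) → ℂ) :
    ((Fin n → ℝ) × (Fin n → ℝ)) → ℂ :=
  fun z => -Complex.I * ∑ j : Fin n,
    ((z.1 j : ℂ) * fderiv ℝ F z (0, Pi.single j 1)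
      - (z.2 j : ℂ) * fderiv ℝ F z (Pi.single j 1, 0))

open scoped ComplexConjugate

noncomputable section Aux
variable {n : ℕ}

def coordCLM (n : ℕ) (i : Fin n) : (Fin n → ℝ) →L[ℝ] ℂ :=
  Complex.ofRealCLM.comp (ContinuousLinearMap.proj i)

/-- multiplication by the coordinate `x i` as a map on Schwartz space -/
def mulCoord (n : ℕ) (i : Fin n) : SchwartzMap (Fin n → ℝ) ℂ →L[ℝ] SchwartzMap (Fin n → ℝ) ℂ :=
  SchwartzMap.bilinLeftCLM ((ContinuousLinearMap.mul ℝ ℂ).flip) (coordCLM n i).hasTemperateGrowth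

@[simp] lemma coordCLM_apply (i : Fin n) (x : Fin n → ℝ) : coordCLM n i x = (x i : ℂ) := rfl

lemma mulCoord_apply (i : Fin n) (f : SchwartzMap (Fin n → ℝ) ℂ) (x : Fin n → ℝ) :
    mulCoord n i f x = (x i : ℂ) * f x := rfl

/-- partial derivative -/
def pd (n : ℕ) (i : Fin n) : SchwartzMap (Fin n → ℝ) ℂ →L[ℝ] SchwartzMap (Fin n → ℝ) ℂ :=
  LineDeriv.lineDerivOpCLM ℝ (SchwartzMap (Fin n → ℝ) ℂ) (Pi.single i 1 : Fin n → ℝ)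

lemma pd_apply (i : Fin n) (f : SchwartzMap (Fin n → ℝ) ℂ) (x : Fin n → ℝ) :
    pd n i f x = fderiv ℝ f x (Pi.single i 1) := rfl

lemma integrable_bddmul (g : (Fin n → ℝ) → ℂ) (hg : Continuous g) (C : ℝ)
    (hC : ∀ x, ‖g x‖ ≤ C) (f : SchwartzMap (Fin n → ℝ) ℂ) :
    Integrable (fun x => g x * f x) := by
  exact f.integrable.bdd_mul hg.aestronglyMeasurable (Filter.Eventually.of_forall hC)

lemma integrable_conj_mul (ψ f : SchwartzMap (Fin n → ℝ) ℂ) :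
    Integrable (fun x => conj (ψ x) * f x) := by
  refine integrable_bddmul _ (Complex.continuous_conj.comp ψ.continuous)
    (SchwartzMap.seminorm ℝ 0 0 ψ) (fun x => ?_) f
  simpa using ψ.norm_le_seminorm ℝ x

lemma hasFDerivAt_conj (ψ : SchwartzMap (Fin n → ℝ) ℂ) (x : Fin n → ℝ) :
    HasFDerivAt (fun y => conj (ψ y))
      ((Complex.conjCLE.toContinuousLinearMap).comp (fderiv ℝ ψ x)) x :=
  (Complex.conjCLE.toContinuousLinearMap.hasFDerivAt).comp x ψ.differentiableAt.hasFDerivAt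

lemma fderiv_conj_apply (ψ : SchwartzMap (Fin n → ℝ) ℂ) (x v : Fin n → ℝ) :
    fderiv ℝ (fun y => conj (ψ y)) x v = conj (fderiv ℝ ψ x v) := by
  rw [(hasFDerivAt_conj ψ x).fderiv]; rfl

lemma differentiable_conj (ψ : SchwartzMap (Fin n → ℝ) ℂ) :
    Differentiable ℝ (fun y => conj (ψ y)) :=
  fun x => (hasFDerivAt_conj ψ x).differentiableAt

lemma pd_mulCoord (j k : Fin n) (f : SchwartzMap (Fin n → ℝ) ℂ) (x : Fin n → ℝ) :
    pd n k (mulCoord n j f) x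
      = (if j = k then 1 else 0) * f x + (x j : ℂ) * pd n k f x := by
  have h1 : HasFDerivAt (fun y : Fin n → ℝ => (coordCLM n j y) * f y)
      ((coordCLM n j x) • (fderiv ℝ f x) + (f x) • (coordCLM n j))
      x := ((coordCLM n j).hasFDerivAt).mul f.differentiableAt.hasFDerivAt
  have : pd n k (mulCoord n j f) x
      = fderiv ℝ (fun y : Fin n → ℝ => (coordCLM n j y) * f y) x (Pi.single k 1) := rfl
  rw [this, h1.fderiv]
  simp only [ContinuousLinearMap.add_apply, ContinuousLinearMap.coe_smul', Pi.smul_apply,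
    smul_eq_mul]
  have hcoord : coordCLM n j (Pi.single k 1) = (((Pi.single k (1:ℝ) : Fin n → ℝ) j : ℝ) : ℂ) := rfl
  rw [hcoord, Pi.single_apply]
  have : coordCLM n j x = (x j : ℂ) := rfl
  rw [this, pd_apply]
  by_cases h : j = k <;> simp [h] <;> ring

/-- Integration by parts: `∫ conj ψ ⬝ ∂_k f = - ∫ conj (∂_k ψ) ⬝ f`. -/
lemma pairing_pd (ψ f : SchwartzMap (Fin n → ℝ) ℂ) (k : Fin n) :
    ∫ x, conj (ψ x) * pd n k f x = - ∫ x, conj (pd n k ψ x) * f x := by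
  have hconj : ∀ x, fderiv ℝ (fun y => conj (ψ y)) x (Pi.single k 1) = conj (pd n k ψ x) :=
    fun x => fderiv_conj_apply ψ x _
  have h1 : Integrable (fun x => fderiv ℝ (fun y => conj (ψ y)) x (Pi.single k 1) * f x) := by
    refine (integrable_conj_mul (pd n k ψ) f).congr
      (Filter.Eventually.of_forall fun x => ?_)
    simp only []; rw [hconj]
  have h2 : Integrable (fun x => conj (ψ x) * fderiv ℝ f x (Pi.single k 1)) :=
    integrable_conj_mul ψ (pd n k f)
  have h3 : Integrable (fun x => conj (ψ x) * f x) := integrable_conj_mul ψ f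
  have := integral_mul_fderiv_eq_neg_fderiv_mul_of_integrable (μ := volume)
    (f := fun x => conj (ψ x)) (g := ⇑f) (v := Pi.single k 1)
    h1 h2 h3 (fun x _ => differentiable_conj ψ x) (fun x _ => f.differentiable x)
  simp only [hconj] at this
  exact this

variable (n) in
/-- `⟨ψ, f⟩ = ∫ conj ψ ⬝ f`. -/
def pairing (ψ f : SchwartzMap (Fin n → ℝ) ℂ) : ℂ := ∫ x, conj (ψ x) * f x

variable (n) in
def Am (ψ : SchwartzMap (Fin n → ℝ) ℂ) (j k : Fin n) : ℂ :=
  pairing n ψ (mulCoord n k (mulCoord n j ψ))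

variable (n) in
def Bm (ψ : SchwartzMap (Fin n → ℝ) ℂ) (j k : Fin n) : ℂ :=
  pairing n ψ (mulCoord n k (pd n j ψ))

variable (n) in
def Dm (ψ : SchwartzMap (Fin n → ℝ) ℂ) (j k : Fin n) : ℂ :=
  ∫ x, conj (pd n j ψ x) * pd n k ψ x

lemma pairing_pd_pd (ψ : SchwartzMap (Fin n → ℝ) ℂ) (j k : Fin n) :
    pairing n ψ (pd n k (pd n j ψ)) = - Dm n ψ k j := by
  rw [pairing, pairing_pd ψ (pd n j ψ) k, Dm]

lemma Bm_add_conj (ψ : SchwartzMap (Fin n → ℝ) ℂ) (j k : Fin n) :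
    Bm n ψ j k + conj (Bm n ψ j k)
      = -(if k = j then 1 else 0) * ∫ x, conj (ψ x) * ψ x := by
  set b : SchwartzMap (Fin n → ℝ) ℂ := pd n j ψ with hb
  have hf' : ∀ x, fderiv ℝ (fun y => conj (ψ y) * (coordCLM n k y)) x (Pi.single j 1)
      = conj (ψ x) * (if k = j then 1 else 0) + (x k : ℂ) * conj (b x) := by
    intro x
    have h := ((hasFDerivAt_conj ψ x).fun_mul ((coordCLM n k).hasFDerivAt)).fderiv
    rw [h]
    have hc : coordCLM n k (Pi.single j 1) = (((Pi.single j (1:ℝ) : Fin n → ℝ) k : ℝ) : ℂ) := rfl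
    simp only [ContinuousLinearMap.add_apply, ContinuousLinearMap.coe_smul', Pi.smul_apply,
      smul_eq_mul, hc, Pi.single_apply]
    have : (Complex.conjCLE.toContinuousLinearMap.comp (fderiv ℝ ψ x)) (Pi.single j 1)
        = conj (b x) := rfl
    rw [this]
    by_cases hkj : k = j <;> simp [hkj] <;> ring
  have hint1 : Integrable (fun x => conj (ψ x) * (mulCoord n k b) x) :=
    integrable_conj_mul ψ (mulCoord n k b)
  have hδψ : Integrable (fun x => (if k = j then (1:ℂ) else 0) * (conj (ψ x) * ψ x)) :=
    (integrable_conj_mul ψ ψ).const_mul _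
  have hxbψ : Integrable (fun x => conj (b x) * (mulCoord n k ψ) x) :=
    integrable_conj_mul b (mulCoord n k ψ)
  have h1 : Integrable (fun x =>
      fderiv ℝ (fun y => conj (ψ y) * (coordCLM n k y)) x (Pi.single j 1) * ψ x) := by
    refine (hδψ.add hxbψ).congr (Filter.Eventually.of_forall fun x => ?_)
    simp only [Pi.add_apply, mulCoord_apply]
    rw [hf' x]
    ring
  have h2 : Integrable (fun x => (conj (ψ x) * (coordCLM n k x)) * fderiv ℝ ψ x (Pi.single j 1)) := by
    refine hint1.congr (Filter.Eventually.of_forall fun x => ?_)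
    simp only [mulCoord_apply, coordCLM_apply, pd_apply, hb]
    ring
  have h3 : Integrable (fun x => (conj (ψ x) * (coordCLM n k x)) * ψ x) := by
    refine (integrable_conj_mul ψ (mulCoord n k ψ)).congr
      (Filter.Eventually.of_forall fun x => ?_)
    simp only [mulCoord_apply, coordCLM_apply]
    ring
  have hdiff : Differentiable ℝ (fun y => conj (ψ y) * (coordCLM n k y)) :=
    (differentiable_conj ψ).mul (coordCLM n k).differentiable
  have key := integral_mul_fderiv_eq_neg_fderiv_mul_of_integrable (μ := volume)
    (f := fun y => conj (ψ y) * (coordCLM n k y)) (g := ⇑ψ) (v := Pi.single j 1)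
    h1 h2 h3 (fun x _ => hdiff x) (fun x _ => ψ.differentiable x)
  -- rewrite LHS of key as Bm
  have hL : ∫ x, (conj (ψ x) * (coordCLM n k x)) * fderiv ℝ ψ x (Pi.single j 1)
      = Bm n ψ j k := by
    rw [Bm, pairing]
    congr 1
    funext x
    simp only [mulCoord_apply, coordCLM_apply, pd_apply, hb]
    ring
  have hR : ∫ x, fderiv ℝ (fun y => conj (ψ y) * (coordCLM n k y)) x (Pi.single j 1) * ψ x
      = (if k = j then 1 else 0) * (∫ x, conj (ψ x) * ψ x) + conj (Bm n ψ j k) := by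
    have : (fun x => fderiv ℝ (fun y => conj (ψ y) * (coordCLM n k y)) x (Pi.single j 1) * ψ x)
        = fun x => (if k = j then (1:ℂ) else 0) * (conj (ψ x) * ψ x)
          + conj (b x) * (mulCoord n k ψ) x := by
      funext x
      simp only [mulCoord_apply]
      rw [hf' x]
      ring
    rw [this, integral_add hδψ hxbψ, integral_const_mul]
    congr 1
    rw [Bm, pairing, ← integral_conj]
    congr 1
    funext x
    simp only [mulCoord_apply, map_mul, Complex.conj_conj, Complex.conj_ofReal]
    ring
  rw [hL, hR] at key
  linear_combination key

lemma Am_symm (ψ : SchwartzMap (Fin n → ℝ) ℂ) (j k : Fin n) : Am n ψ j k = Am n ψ k j := by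
  unfold Am pairing
  congr 1
  funext x
  simp only [mulCoord_apply]
  ring

lemma Am_conj (ψ : SchwartzMap (Fin n → ℝ) ℂ) (j k : Fin n) : conj (Am n ψ j k) = Am n ψ j k := by
  unfold Am pairing
  rw [← integral_conj]
  congr 1
  funext x
  simp only [mulCoord_apply, map_mul, Complex.conj_conj, Complex.conj_ofReal]
  ring

lemma Dm_conj (ψ : SchwartzMap (Fin n → ℝ) ℂ) (j k : Fin n) : conj (Dm n ψ j k) = Dm n ψ k j := by
  unfold Dm
  rw [← integral_conj]
  congr 1
  funext x
  simp only [map_mul, Complex.conj_conj]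
  ring

lemma pairing_pd_mulCoord (ψ : SchwartzMap (Fin n → ℝ) ℂ) (j k : Fin n) :
    pairing n ψ (pd n k (mulCoord n j ψ))
      = (if j = k then 1 else 0) * (∫ x, conj (ψ x) * ψ x) + Bm n ψ k j := by
  unfold pairing Bm pairing
  have : (fun x => conj (ψ x) * pd n k (mulCoord n j ψ) x)
      = fun x => (if j = k then (1:ℂ) else 0) * (conj (ψ x) * ψ x)
        + conj (ψ x) * (mulCoord n j (pd n k ψ)) x := by
    funext x
    rw [pd_mulCoord]
    simp only [mulCoord_apply]
    ring
  rw [this, integral_add (((integrable_conj_mul ψ ψ).const_mul _))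
    (integrable_conj_mul ψ (mulCoord n j (pd n k ψ))), integral_const_mul]

section Tensor

lemma hasFDerivAt_tensor (f g : SchwartzMap (Fin n → ℝ) ℂ) (z : (Fin n → ℝ) × (Fin n → ℝ)) :
    HasFDerivAt (fun w : (Fin n → ℝ) × (Fin n → ℝ) => f w.1 * g w.2)
      ((f z.1 • ((fderiv ℝ g z.2).comp (ContinuousLinearMap.snd ℝ _ _)))
        + (g z.2 • ((fderiv ℝ f z.1).comp (ContinuousLinearMap.fst ℝ _ _)))) z := by
  have hf : HasFDerivAt (fun w : (Fin n → ℝ) × (Fin n → ℝ) => f w.1)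
      ((fderiv ℝ f z.1).comp (ContinuousLinearMap.fst ℝ _ _)) z :=
    (f.differentiableAt.hasFDerivAt).comp z (hasFDerivAt_fst)
  have hg : HasFDerivAt (fun w : (Fin n → ℝ) × (Fin n → ℝ) => g w.2)
      ((fderiv ℝ g z.2).comp (ContinuousLinearMap.snd ℝ _ _)) z :=
    (g.differentiableAt.hasFDerivAt).comp z (hasFDerivAt_snd)
  exact hf.mul hg

/-- master lemma : `rotGen` of a finite sum of tensor products. -/
lemma rotGen_sum_tensor {ι : Type*} [Fintype ι] (c : ι → ℂ)
    (f g : ι → SchwartzMap (Fin n → ℝ) ℂ) :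
    rotGen n (fun w => ∑ j : ι, c j * (f j w.1 * g j w.2))
      = fun z => ∑ k : Fin n, ∑ j : ι,
          ((-Complex.I * c j) * (mulCoord n k (f j) z.1 * pd n k (g j) z.2)
            + (Complex.I * c j) * (pd n k (f j) z.1 * mulCoord n k (g j) z.2)) := by
  funext z
  have hT : HasFDerivAt (fun w : (Fin n → ℝ) × (Fin n → ℝ) => ∑ j : ι, c j * (f j w.1 * g j w.2))
      (∑ j : ι, c j • ((f j z.1 • ((fderiv ℝ (g j) z.2).comp (ContinuousLinearMap.snd ℝ _ _)))
        + (g j z.2 • ((fderiv ℝ (f j) z.1).comp (ContinuousLinearMap.fst ℝ _ _))))) z := by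
    refine HasFDerivAt.fun_sum fun j _ => ?_
    exact (hasFDerivAt_tensor (f j) (g j) z).const_mul (c j)
  have happ : ∀ v : (Fin n → ℝ) × (Fin n → ℝ),
      fderiv ℝ (fun w : (Fin n → ℝ) × (Fin n → ℝ) => ∑ j : ι, c j * (f j w.1 * g j w.2)) z v
        = ∑ j : ι, c j * (f j z.1 * fderiv ℝ (g j) z.2 v.2 + g j z.2 * fderiv ℝ (f j) z.1 v.1) := by
    intro v
    rw [hT.fderiv]
    simp only [ContinuousLinearMap.coe_sum', Finset.sum_apply, ContinuousLinearMap.add_apply,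
      ContinuousLinearMap.coe_smul', Pi.smul_apply, ContinuousLinearMap.coe_comp',
      Function.comp_apply, ContinuousLinearMap.coe_fst', ContinuousLinearMap.coe_snd',
      smul_eq_mul]
  rw [rotGen]
  have h1 : ∀ k : Fin n,
      fderiv ℝ (fun w : (Fin n → ℝ) × (Fin n → ℝ) => ∑ j : ι, c j * (f j w.1 * g j w.2)) z
          ((0 : Fin n → ℝ), Pi.single k 1)
        = ∑ j : ι, c j * (f j z.1 * pd n k (g j) z.2) := by
    intro k
    rw [happ]
    refine Finset.sum_congr rfl fun j _ => ?_
    simp only [map_zero, mul_zero, add_zero, pd_apply]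
  have h2 : ∀ k : Fin n,
      fderiv ℝ (fun w : (Fin n → ℝ) × (Fin n → ℝ) => ∑ j : ι, c j * (f j w.1 * g j w.2)) z
          (Pi.single k 1, (0 : Fin n → ℝ))
        = ∑ j : ι, c j * (g j z.2 * pd n k (f j) z.1) := by
    intro k
    rw [happ]
    refine Finset.sum_congr rfl fun j _ => ?_
    simp only [map_zero, mul_zero, zero_add, pd_apply]
  simp only [h1, h2]
  rw [Finset.mul_sum]
  refine Finset.sum_congr rfl fun k _ => ?_
  rw [Finset.mul_sum, Finset.mul_sum, ← Finset.sum_sub_distrib, Finset.mul_sum]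
  refine Finset.sum_congr rfl fun j _ => ?_
  simp only [mulCoord_apply]
  ring

end Tensor

section Integral

lemma integrable_atom (ψ : SchwartzMap (Fin n → ℝ) ℂ) (c : ℂ) (f g : SchwartzMap (Fin n → ℝ) ℂ) :
    Integrable (fun z : (Fin n → ℝ) × (Fin n → ℝ) =>
      conj (ψ z.1 * ψ z.2) * (c * (f z.1 * g z.2))) := by
  have h : Integrable (fun z : (Fin n → ℝ) × (Fin n → ℝ) =>
      (fun x => conj (ψ x) * f x) z.1 * (fun y => conj (ψ y) * g y) z.2)
      (volume : Measure ((Fin n → ℝ) × (Fin n → ℝ))) := by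
    rw [MeasureTheory.Measure.volume_eq_prod]
    exact (integrable_conj_mul ψ f).mul_prod (integrable_conj_mul ψ g)
  refine (h.const_mul c).congr (Filter.Eventually.of_forall fun z => ?_)
  simp only [map_mul]
  ring

lemma integral_atom (ψ : SchwartzMap (Fin n → ℝ) ℂ) (c : ℂ) (f g : SchwartzMap (Fin n → ℝ) ℂ) :
    (∫ z : (Fin n → ℝ) × (Fin n → ℝ), conj (ψ z.1 * ψ z.2) * (c * (f z.1 * g z.2)))
      = c * (pairing n ψ f * pairing n ψ g) := by
  have h : (fun z : (Fin n → ℝ) × (Fin n → ℝ) => conj (ψ z.1 * ψ z.2) * (c * (f z.1 * g z.2)))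
      = fun z => c * ((fun x => conj (ψ x) * f x) z.1 * (fun y => conj (ψ y) * g y) z.2) := by
    funext z
    simp only [map_mul]
    ring
  have key := integral_prod_mul (μ := (volume : Measure (Fin n → ℝ)))
    (ν := (volume : Measure (Fin n → ℝ)))
    (f := fun x => conj (ψ x) * f x) (g := fun y => conj (ψ y) * g y)
  rw [h, integral_const_mul, MeasureTheory.Measure.volume_eq_prod, key]
  rfl

end Integral

section LHS

variable (n) in
def cc : Fin n × Bool → ℂ := fun p => if p.2 then Complex.I else -Complex.I

variable (n) in
def FF (ψ : SchwartzMap (Fin n → ℝ) ℂ) : Fin n × Bool → SchwartzMap (Fin n → ℝ) ℂ :=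
  fun p => if p.2 then pd n p.1 ψ else mulCoord n p.1 ψ

variable (n) in
def GG (ψ : SchwartzMap (Fin n → ℝ) ℂ) : Fin n × Bool → SchwartzMap (Fin n → ℝ) ℂ :=
  fun p => if p.2 then mulCoord n p.1 ψ else pd n p.1 ψ

lemma inner_rot (ψ : SchwartzMap (Fin n → ℝ) ℂ) :
    rotGen n (fun w => ψ w.1 * ψ w.2)
      = fun z => ∑ p : Fin n × Bool, cc n p * (FF n ψ p z.1 * GG n ψ p z.2) := by
  have hΦ : (fun w : (Fin n → ℝ) × (Fin n → ℝ) => ψ w.1 * ψ w.2)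
      = fun w => ∑ _j : Fin 1, (1:ℂ) * ((fun _ : Fin 1 => ψ) _j w.1 * (fun _ : Fin 1 => ψ) _j w.2) := by
    funext w
    simp
  rw [hΦ, rotGen_sum_tensor]
  funext z
  rw [Fintype.sum_prod_type]
  refine Finset.sum_congr rfl fun k _ => ?_
  simp [Fin.sum_univ_one, Fintype.sum_bool, cc, FF, GG]
  ring

lemma lhs_eval (ψ : SchwartzMap (Fin n → ℝ) ℂ)
    (hnorm1 : (∫ x, conj (ψ x) * ψ x) = 1) :
    (∫ z : (Fin n → ℝ) × (Fin n → ℝ),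
        conj (ψ z.1 * ψ z.2) * rotGen n (rotGen n (fun w => ψ w.1 * ψ w.2)) z)
      = ∑ k : Fin n, ∑ l : Fin n,
          (2 * Am n ψ l k * Dm n ψ k l + 2 * Bm n ψ l k * Bm n ψ k l
            + 2 * (if l = k then 1 else 0) * Bm n ψ l k) := by
  rw [inner_rot, rotGen_sum_tensor]
  have hexp : (fun z : (Fin n → ℝ) × (Fin n → ℝ) => conj (ψ z.1 * ψ z.2) *
        (∑ k : Fin n, ∑ p : Fin n × Bool,
          (-Complex.I * cc n p * (mulCoord n k (FF n ψ p) z.1 * pd n k (GG n ψ p) z.2)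
            + Complex.I * cc n p * (pd n k (FF n ψ p) z.1 * mulCoord n k (GG n ψ p) z.2))))
      = fun z => ∑ q : Fin n × (Fin n × Bool),
          (conj (ψ z.1 * ψ z.2) * (-Complex.I * cc n q.2 *
              (mulCoord n q.1 (FF n ψ q.2) z.1 * pd n q.1 (GG n ψ q.2) z.2))
            + conj (ψ z.1 * ψ z.2) * (Complex.I * cc n q.2 *
              (pd n q.1 (FF n ψ q.2) z.1 * mulCoord n q.1 (GG n ψ q.2) z.2))) := by
    funext z
    rw [Fintype.sum_prod_type]
    simp only [Finset.mul_sum, mul_add]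
  have hintq : ∀ q : Fin n × (Fin n × Bool), Integrable (fun z : (Fin n → ℝ) × (Fin n → ℝ) =>
      conj (ψ z.1 * ψ z.2) * (-Complex.I * cc n q.2 *
          (mulCoord n q.1 (FF n ψ q.2) z.1 * pd n q.1 (GG n ψ q.2) z.2))
        + conj (ψ z.1 * ψ z.2) * (Complex.I * cc n q.2 *
          (pd n q.1 (FF n ψ q.2) z.1 * mulCoord n q.1 (GG n ψ q.2) z.2))) :=
    fun q => (integrable_atom ψ _ _ _).add (integrable_atom ψ _ _ _)
  rw [hexp, integral_finset_sum _ (fun q _ => hintq q)]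
  trans (∑ q : Fin n × (Fin n × Bool),
      ((-Complex.I * cc n q.2) * (pairing n ψ (mulCoord n q.1 (FF n ψ q.2))
          * pairing n ψ (pd n q.1 (GG n ψ q.2)))
        + (Complex.I * cc n q.2) * (pairing n ψ (pd n q.1 (FF n ψ q.2))
          * pairing n ψ (mulCoord n q.1 (GG n ψ q.2)))))
  · refine Finset.sum_congr rfl fun q _ => ?_
    rw [integral_add (integrable_atom ψ _ _ _) (integrable_atom ψ _ _ _),
      integral_atom, integral_atom]
  rw [Fintype.sum_prod_type]
  refine Finset.sum_congr rfl fun k _ => ?_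
  rw [Fintype.sum_prod_type]
  refine Finset.sum_congr rfl fun l _ => ?_
  rw [Fintype.sum_bool]
  simp only [cc, FF, GG, if_true, if_false, Bool.false_eq_true, ite_true, ite_false]
  have e1 : pairing n ψ (mulCoord n k (mulCoord n l ψ)) = Am n ψ l k := rfl
  have e2 : pairing n ψ (mulCoord n k (pd n l ψ)) = Bm n ψ l k := rfl
  have e3 : pairing n ψ (pd n k (pd n l ψ)) = -Dm n ψ k l := pairing_pd_pd ψ l k
  have e4 : pairing n ψ (pd n k (mulCoord n l ψ))
      = (if l = k then 1 else 0) * (∫ x, conj (ψ x) * ψ x) + Bm n ψ k l :=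
    pairing_pd_mulCoord ψ l k
  rw [e1, e2, e3, e4, hnorm1]
  ring_nf
  simp only [Complex.I_sq]
  ring
end LHS

section Cov

variable (ψ : SchwartzMap (Fin n → ℝ) ℂ)

lemma norm_one_of (hnorm : ∫ x, ‖ψ x‖ ^ 2 = 1) : (∫ x, conj (ψ x) * ψ x) = 1 := by
  have h : (fun x => conj (ψ x) * ψ x) = fun x => ((‖ψ x‖ ^ 2 : ℝ) : ℂ) := by
    funext x
    rw [Complex.conj_mul']
    norm_cast
  rw [h]
  have : (fun x => ((‖ψ x‖ ^ 2 : ℝ) : ℂ)) = fun x => ((‖ψ x‖ ^ 2 : ℝ) : ℂ) := rfl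
  rw [show (∫ x, ((‖ψ x‖ ^ 2 : ℝ) : ℂ)) = ((∫ x, ‖ψ x‖ ^ 2 : ℝ) : ℂ) from integral_ofReal,
    hnorm, Complex.ofReal_one]

variable {ψ} (hm0 : ∀ j, firstMoment n (⇑ψ) j = 0)
include hm0

lemma cov_simp (j k : Fin n ⊕ Fin n) :
    covMatrix n (⇑ψ) j k
      = 2 * (∫ x, conj (quadratureOp n j (⇑ψ) x) * quadratureOp n k (⇑ψ) x).re := by
  simp only [covMatrix, Matrix.of_apply, hm0, Complex.ofReal_zero, zero_mul, sub_zero]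

lemma cov_ll (a b : Fin n) :
    covMatrix n (⇑ψ) (Sum.inl a) (Sum.inl b) = 2 * (Am n ψ a b).re := by
  rw [cov_simp hm0]
  have h : (fun x => conj (quadratureOp n (Sum.inl a) (⇑ψ) x)
        * quadratureOp n (Sum.inl b) (⇑ψ) x)
      = fun x => conj (ψ x) * (mulCoord n b (mulCoord n a ψ)) x := by
    funext x
    show conj ((x a : ℂ) * ψ x) * ((x b : ℂ) * ψ x) = _
    simp only [map_mul, Complex.conj_ofReal, mulCoord_apply]
    ring
  rw [h]
  rfl

lemma cov_lr (a b : Fin n) :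
    covMatrix n (⇑ψ) (Sum.inl a) (Sum.inr b) = 2 * (Bm n ψ b a).im := by
  rw [cov_simp hm0]
  have h : (fun x => conj (quadratureOp n (Sum.inl a) (⇑ψ) x)
        * quadratureOp n (Sum.inr b) (⇑ψ) x)
      = fun x => -Complex.I * (conj (ψ x) * (mulCoord n a (pd n b ψ)) x) := by
    funext x
    show conj ((x a : ℂ) * ψ x) * (-Complex.I * fderiv ℝ (⇑ψ) x (Pi.single b 1)) = _
    simp only [map_mul, Complex.conj_ofReal, mulCoord_apply, pd_apply]
    ring
  rw [h, integral_const_mul]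
  have : (∫ x, conj (ψ x) * (mulCoord n a (pd n b ψ)) x) = Bm n ψ b a := rfl
  rw [this]
  simp [Complex.mul_re]

lemma cov_rl (a b : Fin n) :
    covMatrix n (⇑ψ) (Sum.inr a) (Sum.inl b) = 2 * (Bm n ψ a b).im := by
  rw [cov_simp hm0]
  have h : (fun x => conj (quadratureOp n (Sum.inr a) (⇑ψ) x)
        * quadratureOp n (Sum.inl b) (⇑ψ) x)
      = fun x => Complex.I * conj (conj (ψ x) * (mulCoord n b (pd n a ψ)) x) := by
    funext x
    show conj (-Complex.I * fderiv ℝ (⇑ψ) x (Pi.single a 1)) * ((x b : ℂ) * ψ x) = _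
    simp only [map_mul, Complex.conj_ofReal, mulCoord_apply, pd_apply, Complex.conj_conj,
      map_neg, Complex.conj_I]
    ring
  rw [h, integral_const_mul, integral_conj]
  have : (∫ x, conj (ψ x) * (mulCoord n b (pd n a ψ)) x) = Bm n ψ a b := rfl
  rw [this]
  simp [Complex.mul_re]

lemma cov_rr (a b : Fin n) :
    covMatrix n (⇑ψ) (Sum.inr a) (Sum.inr b) = 2 * (Dm n ψ a b).re := by
  rw [cov_simp hm0]
  congr 2
  have h : (fun x => conj (quadratureOp n (Sum.inr a) (⇑ψ) x)
        * quadratureOp n (Sum.inr b) (⇑ψ) x)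
      = fun x => conj (pd n a ψ x) * pd n b ψ x := by
    funext x
    show conj (-Complex.I * fderiv ℝ (⇑ψ) x (Pi.single a 1))
        * (-Complex.I * fderiv ℝ (⇑ψ) x (Pi.single b 1)) = _
    simp only [map_mul, map_neg, Complex.conj_I, pd_apply]
    ring_nf
    simp only [Complex.I_sq]
    ring
  rw [h]
  rfl

end Cov

section Trace

lemma trace_sympl (V : Matrix (Fin n ⊕ Fin n) (Fin n ⊕ Fin n) ℝ) :
    (symplOmega n * V * (symplOmega n).transpose * V).trace
      = ∑ j : Fin n, ∑ k : Fin n,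
          (V (Sum.inr j) (Sum.inr k) * V (Sum.inl k) (Sum.inl j)
            + V (Sum.inl j) (Sum.inl k) * V (Sum.inr k) (Sum.inr j)
            - V (Sum.inr j) (Sum.inl k) * V (Sum.inr k) (Sum.inl j)
            - V (Sum.inl j) (Sum.inr k) * V (Sum.inl k) (Sum.inr j)) := by
  have h1 : ∀ (j : Fin n) (b), (symplOmega n * V) (Sum.inl j) b = V (Sum.inr j) b := by
    intro j b
    rw [Matrix.mul_apply, Fintype.sum_sum_type]
    simp [symplOmega, Matrix.one_apply]
  have h2 : ∀ (j : Fin n) (b), (symplOmega n * V) (Sum.inr j) b = -V (Sum.inl j) b := by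
    intro j b
    rw [Matrix.mul_apply, Fintype.sum_sum_type]
    simp [symplOmega, Matrix.one_apply]
  have h3 : ∀ (a) (k : Fin n),
      (symplOmega n * V * (symplOmega n).transpose) a (Sum.inl k)
        = (symplOmega n * V) a (Sum.inr k) := by
    intro a k
    rw [Matrix.mul_apply, Fintype.sum_sum_type]
    simp [symplOmega, Matrix.transpose_apply, Matrix.one_apply]
  have h4 : ∀ (a) (k : Fin n),
      (symplOmega n * V * (symplOmega n).transpose) a (Sum.inr k)
        = -(symplOmega n * V) a (Sum.inl k) := by
    intro a k
    rw [Matrix.mul_apply, Fintype.sum_sum_type]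
    simp [symplOmega, Matrix.transpose_apply, Matrix.one_apply]
  rw [Matrix.trace]
  rw [Fintype.sum_sum_type]
  have hll : ∀ j : Fin n, (symplOmega n * V * (symplOmega n).transpose * V).diag (Sum.inl j)
      = ∑ k : Fin n, (V (Sum.inr j) (Sum.inr k) * V (Sum.inl k) (Sum.inl j)
          - V (Sum.inr j) (Sum.inl k) * V (Sum.inr k) (Sum.inl j)) := by
    intro j
    rw [Matrix.diag, Matrix.mul_apply, Fintype.sum_sum_type,
      Finset.sum_sub_distrib, sub_eq_add_neg, ← Finset.sum_neg_distrib]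
    congr 1
    · refine Finset.sum_congr rfl fun k _ => ?_
      rw [h3, h1]
    · refine Finset.sum_congr rfl fun k _ => ?_
      rw [h4, h1]
      ring
  have hrr : ∀ j : Fin n, (symplOmega n * V * (symplOmega n).transpose * V).diag (Sum.inr j)
      = ∑ k : Fin n, (-(V (Sum.inl j) (Sum.inr k) * V (Sum.inl k) (Sum.inr j)))
        + ∑ k : Fin n, (V (Sum.inl j) (Sum.inl k) * V (Sum.inr k) (Sum.inr j)) := by
    intro j
    rw [Matrix.diag, Matrix.mul_apply, Fintype.sum_sum_type]
    congr 1
    · refine Finset.sum_congr rfl fun k _ => ?_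
      rw [h3, h2]
      ring
    · refine Finset.sum_congr rfl fun k _ => ?_
      rw [h4, h2]
      ring
  simp only [hll, hrr]
  rw [← Finset.sum_add_distrib]
  refine Finset.sum_congr rfl fun j _ => ?_
  rw [← Finset.sum_add_distrib, ← Finset.sum_add_distrib]
  refine Finset.sum_congr rfl fun k _ => ?_
  ring

end Trace

section Algebra

lemma sum2_add_swap {N : ℕ} (H : Fin N → Fin N → ℂ) :
    ∑ k : Fin N, ∑ l : Fin N, (H k l + H l k) = 2 * ∑ k : Fin N, ∑ l : Fin N, H k l := by
  have hsplit : ∑ k : Fin N, ∑ l : Fin N, (H k l + H l k)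
      = (∑ k : Fin N, ∑ l : Fin N, H k l) + ∑ k : Fin N, ∑ l : Fin N, H l k := by
    rw [← Finset.sum_add_distrib]
    refine Finset.sum_congr rfl fun k _ => ?_
    rw [← Finset.sum_add_distrib]
  rw [hsplit, show (∑ k : Fin N, ∑ l : Fin N, H l k) = ∑ k : Fin N, ∑ l : Fin N, H k l from
    Finset.sum_comm, two_mul]

lemma key_algebra {N : ℕ} (A D B : Fin N → Fin N → ℂ)
    (hA : ∀ j k, A j k = A k j) (hAr : ∀ j k, conj (A j k) = A j k)
    (hD : ∀ j k, conj (D j k) = D k j)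
    (hBB : ∀ j k, B j k + conj (B j k) = -(if k = j then 1 else 0)) :
    ∑ k : Fin N, ∑ l : Fin N, (2 * A l k * D k l + 2 * B l k * B k l
        + 2 * (if l = k then 1 else 0) * B l k)
      = (((1/4 : ℝ) * (∑ j : Fin N, ∑ k : Fin N,
          (2*(D j k).re * (2*(A k j).re) + 2*(A j k).re * (2*(D k j).re)
            - 2*(B j k).im * (2*(B k j).im) - 2*(B k j).im * (2*(B j k).im)))
          - N/2 : ℝ) : ℂ) := by
  -- facts about real/imaginary parts
  have hBre : ∀ j k, (B j k).re = -(if k = j then (1:ℝ) else 0) / 2 := by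
    intro j k
    have h := congrArg Complex.re (hBB j k)
    simp only [Complex.add_re, Complex.conj_re, Complex.neg_re] at h
    rw [show ((if k = j then (1:ℂ) else 0)).re = (if k = j then (1:ℝ) else 0) by
      by_cases hkj : k = j <;> simp [hkj]] at h
    linarith
  have hAre : ∀ j k, A j k = ((A j k).re : ℂ) := by
    intro j k
    exact ((Complex.conj_eq_iff_re).mp (hAr j k)).symm
  -- rewrite RHS as a double sum of complex numbers
  have hN : ((N : ℝ)) = ∑ k : Fin N, ∑ l : Fin N, (if l = k then (1:ℝ) else 0) := by
    have : ∀ k : Fin N, ∑ l : Fin N, (if l = k then (1:ℝ) else 0) = 1 := by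
      intro k
      simp
    simp [this]
  rw [hN]
  set G : Fin N → Fin N → ℂ := fun j k =>
    (((2*(D j k).re * (2*(A k j).re) + 2*(A j k).re * (2*(D k j).re)
      - 2*(B j k).im * (2*(B k j).im) - 2*(B k j).im * (2*(B j k).im)) : ℝ) : ℂ) * (1/4)
      - ((if k = j then (1:ℂ) else 0)) / 2 with hG
  have hRHS : (((1/4 : ℝ) * (∑ j : Fin N, ∑ k : Fin N,
          (2*(D j k).re * (2*(A k j).re) + 2*(A j k).re * (2*(D k j).re)
            - 2*(B j k).im * (2*(B k j).im) - 2*(B k j).im * (2*(B j k).im)))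
          - (∑ k : Fin N, ∑ l : Fin N, (if l = k then (1:ℝ) else 0))/2 : ℝ) : ℂ)
      = ∑ j : Fin N, ∑ k : Fin N, G j k := by
    rw [hG]
    push_cast
    rw [Finset.sum_div, Finset.mul_sum, ← Finset.sum_sub_distrib]
    refine Finset.sum_congr rfl fun j _ => ?_
    rw [Finset.sum_div, Finset.mul_sum, ← Finset.sum_sub_distrib]
    refine Finset.sum_congr rfl fun k _ => ?_
    rw [apply_ite (fun r : ℝ => (r : ℂ))]
    push_cast
    ring
  rw [hRHS]
  set F : Fin N → Fin N → ℂ := fun k l =>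
    2 * A l k * D k l + 2 * B l k * B k l + 2 * (if l = k then 1 else 0) * B l k with hF
  show ∑ k : Fin N, ∑ l : Fin N, F k l = ∑ j : Fin N, ∑ k : Fin N, G j k
  have key : ∀ k l, F k l + F l k = G k l + G l k := by
    intro k l
    rw [hF, hG]
    simp only []
    have hDd : D k l = ((D k l).re : ℂ) + ((D k l).im : ℂ) * Complex.I :=
      (Complex.re_add_im _).symm
    have hDc : D l k = ((D k l).re : ℂ) - ((D k l).im : ℂ) * Complex.I := by
      rw [← hD k l]
      apply Complex.ext <;> simp
    have hDlkre : (D l k).re = (D k l).re := by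
      rw [← hD k l, Complex.conj_re]
    have hb1 : B l k = ((B l k).re : ℂ) + ((B l k).im : ℂ) * Complex.I :=
      (Complex.re_add_im _).symm
    have hb2 : B k l = ((B k l).re : ℂ) + ((B k l).im : ℂ) * Complex.I :=
      (Complex.re_add_im _).symm
    by_cases hlk : l = k
    · subst hlk
      have h0 : (B l l).re = -(1:ℝ)/2 := by
        have := hBre l l
        simpa using this
      rw [h0] at hb1
      generalize hβ : (B l l).im = β at hb1 ⊢
      generalize ha : (A l l).re = a
      generalize hdr : (D l l).re = d
      have hd' : D l l = (d : ℂ) := by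
        rw [← hdr]
        exact ((Complex.conj_eq_iff_re).mp (hD l l)).symm
      rw [hAre l l, ha, hd', hb1]
      simp only [if_pos rfl]
      apply Complex.ext <;>
        simp [Complex.add_re, Complex.add_im, Complex.mul_re, Complex.mul_im,
          Complex.ofReal_re, Complex.ofReal_im, Complex.I_re, Complex.I_im] <;>
        ring
    · have hlk' : ¬ (k = l) := fun h => hlk h.symm
      have h01 : (B l k).re = 0 := by
        have := hBre l k
        simpa [hlk'] using this
      have h02 : (B k l).re = 0 := by
        have := hBre k l
        simpa [hlk] using this
      rw [h01] at hb1
      rw [h02] at hb2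
      have hAkl : (A k l).re = (A l k).re := by rw [hA k l]
      rw [hDlkre, hAkl]
      generalize hβ : (B l k).im = β at hb1 ⊢
      generalize hγ : (B k l).im = γ at hb2 ⊢
      generalize ha : (A l k).re = a
      generalize hd1 : (D k l).re = d1 at hDd hDc ⊢
      generalize hd2 : (D k l).im = d2 at hDd hDc ⊢
      rw [hAre l k, hAre k l, hA k l, ha, hDd, hDc, hb1, hb2]
      simp only [if_neg hlk, if_neg hlk']
      apply Complex.ext <;>
        simp [Complex.add_re, Complex.add_im, Complex.sub_re, Complex.sub_im,
          Complex.mul_re, Complex.mul_im,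
          Complex.ofReal_re, Complex.ofReal_im, Complex.I_re, Complex.I_im] <;>
        ring
  have h2 : 2 * ∑ k : Fin N, ∑ l : Fin N, F k l = 2 * ∑ j : Fin N, ∑ k : Fin N, G j k := by
    rw [← sum2_add_swap F, ← sum2_add_swap G]
    refine Finset.sum_congr rfl fun k _ => ?_
    refine Finset.sum_congr rfl fun l _ => ?_
    exact key k l
  exact mul_left_cancel₀ two_ne_zero h2

end Algebra

end Aux

/-- for a normalized Schwartz `ψ` with vanishing first moments,
`⟨ψ⊗ψ, G² (ψ⊗ψ)⟩ = (1/4)·Tr(Ω V Ωᵀ V) − n/2` where `V = V(ψ)`. -/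
theorem inner_rotGen_sq_eq_symplectic_trace
    (n : ℕ) (hn : 1 ≤ n) (ψ : SchwartzMap (Fin n → ℝ) ℂ)
    (hnorm : ∫ x, ‖ψ x‖ ^ 2 = 1)
    (hmean : ∀ j : Fin n ⊕ Fin n, ∫ x, (starRingEnd ℂ) (ψ x) * quadratureOp n j (⇑ψ) x = 0) :
    (∫ z : (Fin n → ℝ) × (Fin n → ℝ),
        (starRingEnd ℂ) (ψ z.1 * ψ z.2) *
          rotGen n (rotGen n (fun w => ψ w.1 * ψ w.2)) z)
      = (((1 / 4 : ℝ) * (symplOmega n * covMatrix n ⇑ψ * (symplOmega n).transpose *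
            covMatrix n ⇑ψ).trace - n / 2 : ℝ) : ℂ) := by
  have hnorm1 : (∫ x, conj (ψ x) * ψ x) = 1 := norm_one_of ψ hnorm
  have hm0 : ∀ j, firstMoment n (⇑ψ) j = 0 := by
    intro j
    simp [firstMoment, hmean j]
  rw [lhs_eval ψ hnorm1, trace_sympl (covMatrix n ⇑ψ)]
  simp only [cov_ll hm0, cov_lr hm0, cov_rl hm0, cov_rr hm0]
  exact key_algebra (Am n ψ) (Dm n ψ) (Bm n ψ) (Am_symm ψ) (Am_conj ψ) (Dm_conj ψ)
    (fun j k => (Bm_add_conj ψ j k).trans (by rw [hnorm1]; ring))
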